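/- Let K be a number field with [K : ℚ] = 2 that is Galois over ℚ, let σ be the nontrivial element of Gal(K/ℚ), and let p be a prime number that ramifies in K, i.e. there is a nonzero prime ideal 𝔭 of 𝓞_K with 𝔭² = p𝓞_K. Assume every unit of 𝓞_K equals 1 or −1. Let u ∈ Kˣ be such that pⁿ·u ∈ 𝓞_K and pᵐ·u⁻¹ ∈ 𝓞_K for some natural numbers n, m (i.e. u is a unit of the subring 𝓞_K[1/p] of K), and suppose u · σ(u) = 1. Then u = 1 or u = −1. -/

import Mathlib

open NumberField

/-- Let `K` be a quadratic number field, Galois over `ℚ`, with nontrivial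
automorphism `σ`, in which the prime `p` ramifies (`p𝓞_K = 𝔭²`), and assume every unit of
`𝓞_K` is `±1`. Then every norm-one unit `u` of `𝓞_K[1/p]` equals `1` or `-1`. -/
theorem norm_one_unit_of_Zp_order_eq_pm_one (K : Type*) [Field K] [NumberField K]
    [IsGalois ℚ K] (h2 : Module.finrank ℚ K = 2)
    (σ : K ≃ₐ[ℚ] K) (hσ : σ ≠ AlgEquiv.refl)
    (p : ℕ) (hp : p.Prime)
    (𝔭 : Ideal (𝓞 K)) (h𝔭 : 𝔭.IsPrime) (h𝔭ne : 𝔭 ≠ ⊥)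
    (hram : 𝔭 ^ 2 = Ideal.span {(p : 𝓞 K)})
    (hunits : ∀ w : (𝓞 K)ˣ, (w : 𝓞 K) = 1 ∨ (w : 𝓞 K) = -1)
    (u : Kˣ)
    (hu : ∃ (n : ℕ) (a : 𝓞 K), (p : K) ^ n * (u : K) = algebraMap (𝓞 K) K a)
    (hu' : ∃ (m : ℕ) (b : 𝓞 K), (p : K) ^ m * ((u⁻¹ : Kˣ) : K) = algebraMap (𝓞 K) K b)
    (hnorm : (u : K) * σ (u : K) = 1) :
    (u : K) = 1 ∨ (u : K) = -1 := by
  obtain ⟨n, a, ha⟩ := hu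
  obtain ⟨m, b, hb⟩ := hu'
  set σ' : (𝓞 K) ≃+* (𝓞 K) := RingOfIntegers.mapRingEquiv σ with hσ'
  have hcoe : ∀ x : 𝓞 K, (algebraMap (𝓞 K) K) (σ' x) = σ (algebraMap (𝓞 K) K x) := fun _ => rfl
  have hpK : (p : K) ≠ 0 := Nat.cast_ne_zero.mpr hp.ne_zero
  have hpO : (p : 𝓞 K) ≠ 0 := by exact_mod_cast Nat.cast_ne_zero.mpr hp.ne_zero
  have hinj : Function.Injective (algebraMap (𝓞 K) K) := RingOfIntegers.coe_injective
  -- a * σ' a = p ^ (2*n)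
  have haσ : a * σ' a = (p : 𝓞 K) ^ (2 * n) := by
    apply hinj
    rw [map_mul, hcoe, ← ha, map_pow, map_natCast, map_mul, map_pow, map_natCast]
    calc (p:K)^n * (u:K) * ((p:K)^n * σ (u:K)) = (p:K)^(2*n) * ((u:K) * σ (u:K)) := by ring
      _ = (p:K)^(2*n) := by rw [hnorm, mul_one]
  -- a * b = p ^ (n + m)
  have hab : a * b = (p : 𝓞 K) ^ (n + m) := by
    apply hinj
    rw [map_mul, ← ha, ← hb, map_pow, map_natCast]
    field_simp
    linear_combination ((p : K) ^ n * (p : K) ^ m) * Units.mul_inv u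
  -- 𝔭 is prime as an element of the ideal monoid
  have hPprime : Prime 𝔭 := Ideal.prime_of_isPrime h𝔭ne h𝔭
  -- σ' fixes 𝔭
  have hmap𝔭 : Ideal.map σ' 𝔭 = 𝔭 := by
    have hsq : (Ideal.map σ' 𝔭) ^ 2 = 𝔭 ^ 2 := by
      rw [← Ideal.map_pow, hram, Ideal.map_span]
      simp only [Set.image_singleton, map_natCast, ← hram]
    have hprime2 : Prime (Ideal.map σ' 𝔭) := by
      have : (Ideal.map σ' 𝔭).IsPrime := Ideal.map_isPrime_of_equiv σ'
      refine Ideal.prime_of_isPrime ?_ this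
      intro hbot
      apply h𝔭ne
      have hc : Ideal.comap σ' (Ideal.map σ' 𝔭) = 𝔭 :=
        Ideal.comap_map_of_bijective σ' σ'.bijective
      rw [hbot, Ideal.comap_bot_of_injective σ' σ'.injective] at hc
      exact hc.symm
    have hdvd : 𝔭 ∣ Ideal.map σ' 𝔭 := by
      apply hPprime.dvd_of_dvd_pow (n := 2)
      rw [hsq]
      exact dvd_pow_self _ two_ne_zero
    exact ((prime_dvd_prime_iff_eq hPprime hprime2).mp hdvd).symm
  -- the ideal generated by a is a power of 𝔭
  have hIdvd : Ideal.span {a} ∣ 𝔭 ^ (2 * (n + m)) := by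
    have : (Ideal.span {a} : Ideal (𝓞 K)) ∣ Ideal.span {(p : 𝓞 K) ^ (n + m)} :=
      Ideal.dvd_span_singleton.mpr (Ideal.mem_span_singleton.mpr ⟨b, hab.symm⟩)
    rwa [← Ideal.span_singleton_pow, ← hram, ← pow_mul] at this
  obtain ⟨j, hjle, hj⟩ := (dvd_prime_pow hPprime _).mp hIdvd
  rw [associated_iff_eq] at hj
  -- compute j = 2 * n
  have hmapI : Ideal.map σ' (Ideal.span {a}) = 𝔭 ^ j := by
    rw [hj, Ideal.map_pow, hmap𝔭]
  have hprod : 𝔭 ^ (2 * j) = 𝔭 ^ (4 * n) := by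
    have h1 : Ideal.span {a} * Ideal.map σ' (Ideal.span {a}) = 𝔭 ^ (4 * n) := by
      rw [Ideal.map_span, Set.image_singleton, Ideal.span_singleton_mul_span_singleton, haσ,
        ← Ideal.span_singleton_pow, ← hram, ← pow_mul]
      ring_nf
    rw [hmapI, hj, ← pow_add] at h1
    rw [two_mul]
    exact h1
  have hj2n : j = 2 * n := by
    have hnotunit : ¬ IsUnit 𝔭 := hPprime.not_unit
    have := pow_injective_of_not_isUnit hnotunit h𝔭ne hprod
    omega
  -- hence span {a} = span {p ^ n}, so a is associated to p ^ n
  have hspan : Ideal.span {a} = Ideal.span {(p : 𝓞 K) ^ n} := by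
    rw [hj, hj2n, pow_mul, hram, Ideal.span_singleton_pow]
  obtain ⟨w, hw⟩ := Ideal.span_singleton_eq_span_singleton.mp hspan
  -- conclude
  have hwK : (p : K) ^ n * (u : K) * (algebraMap (𝓞 K) K w) = (p : K) ^ n := by
    have := congrArg (algebraMap (𝓞 K) K) hw
    rw [map_mul, map_pow, map_natCast, ← ha] at this
    exact this
  have huw : (u : K) * (algebraMap (𝓞 K) K w) = 1 := by
    have hpn : (p : K) ^ n ≠ 0 := pow_ne_zero _ hpK
    apply mul_left_cancel₀ hpn
    rw [mul_one, ← mul_assoc]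
    exact hwK
  rcases hunits w with h1 | h1
  · left
    rw [h1, map_one, mul_one] at huw
    exact huw
  · right
    rw [h1, map_neg, map_one, mul_neg_one] at huw
    exact neg_eq_iff_eq_neg.mp huw
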